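/- arXiv:2004.00766 — 8 statements merged into one kernel-verified Lean document; each statement's English description precedes it below -/
import Mathlib

section
/- Let K, I ≥ 1, let x₁, …, x_I ∈ ℝ^K, and let γ ∈ ℝ. Suppose there exist indices i₁, i₂ ∈ {1, …, I} such that x_{i₁} ≠ x_{i₂} and x_{i₁} ≠ −x_{i₂}. Then there exists a set E ⊆ ℝ^K of Lebesgue measure zero with the following property: for every β ∈ ℝ^K with β ∉ E, letting Γ = max_{1 ≤ j ≤ I} exp(|⟨β, x_j⟩ + γ|), there exists an index i* ∈ {1, …, I} with exp(|⟨β, x_{i*}⟩ + γ|) = Γ, and for every i ∈ {1, …, I} with x_i ≠ x_{i*} and x_i ≠ −x_{i*}, the number Υ_i = exp(|⟨β, x_i⟩ + γ|) satisfies Υ_i < Γ and, for all u, u′ ∈ [0,1], Υ_i^{−1} ≤ exp((⟨β, x_i⟩ + γ)(u − u′)) ≤ Υ_i. -/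
open Real RealInnerProductSpace MeasureTheory

lemma null_hyperplane {K : ℕ} (v : EuclideanSpace ℝ (Fin K)) (hv : v ≠ 0) (c : ℝ) :
    volume {β : EuclideanSpace ℝ (Fin K) | ⟪β, v⟫ = c} = 0 := by
  set S : Submodule ℝ (EuclideanSpace ℝ (Fin K)) := LinearMap.ker (innerSL ℝ v : EuclideanSpace ℝ (Fin K) →ₗ[ℝ] ℝ) with hS
  have hStop : S ≠ ⊤ := by
    intro h
    have : ⟪v, v⟫ = (0:ℝ) := by
      have : v ∈ S := h ▸ Submodule.mem_top
      simpa [hS] using this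
    exact hv (inner_self_eq_zero.mp this)
  have hSvol : volume (S : Set (EuclideanSpace ℝ (Fin K))) = 0 :=
    Measure.addHaar_submodule volume S hStop
  set a : EuclideanSpace ℝ (Fin K) := (c / ‖v‖^2) • v with ha
  have hset : {β : EuclideanSpace ℝ (Fin K) | ⟪β, v⟫ = c}
      = (fun β => (-a) + β) ⁻¹' (S : Set (EuclideanSpace ℝ (Fin K))) := by
    ext β
    have hvv : ⟪v, v⟫ = (‖v‖:ℝ)^2 := real_inner_self_eq_norm_sq v
    have hnv : (‖v‖:ℝ)^2 ≠ 0 := pow_ne_zero 2 (norm_ne_zero_iff.mpr hv)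
    simp only [Set.mem_preimage, SetLike.mem_coe, LinearMap.mem_ker, ContinuousLinearMap.coe_coe, innerSL_apply_apply, hS,
      Set.mem_setOf_eq, ha, inner_add_right, inner_neg_right, inner_smul_right,
      real_inner_comm β v, hvv]
    rw [div_mul_cancel₀ c hnv]
    constructor <;> intro h <;> linarith
  rw [hset]
  rw [measure_preimage_add]
  exact hSvol


/-- Theorem 1 of the paper: if two matched sets have covariate vectors with
`x_{i₁} ≠ ±x_{i₂}`, then there is a Lebesgue-null set `E ⊆ ℝ^K` such that for every `β ∉ E`,
letting `Γ = max_j exp |⟨β, x_j⟩ + γ|`, there is an index `i*` attaining the max, and for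
every matched set `i` with `x_i ≠ ±x_{i*}` the quantity `Υ_i = exp |⟨β, x_i⟩ + γ|` satisfies
`Υ_i < Γ` and `Υ_i⁻¹ ≤ exp ((⟨β, x_i⟩ + γ)(u - u')) ≤ Υ_i` for all `u, u' ∈ [0,1]`. -/
theorem stmt4 (K I : ℕ) (hK : 1 ≤ K) (hI : 1 ≤ I)
    (x : Fin I → EuclideanSpace ℝ (Fin K)) (γ : ℝ)
    (hx : ∃ i₁ i₂ : Fin I, x i₁ ≠ x i₂ ∧ x i₁ ≠ -x i₂) :
    ∃ E : Set (EuclideanSpace ℝ (Fin K)), MeasureTheory.volume E = 0 ∧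
      ∀ β : EuclideanSpace ℝ (Fin K), β ∉ E →
        ∃ istar : Fin I,
          Real.exp |⟪β, x istar⟫ + γ| =
            (Finset.univ.sup' (Finset.univ_nonempty_iff.mpr (Fin.pos_iff_nonempty.mp hI))
              fun j => Real.exp |⟪β, x j⟫ + γ|) ∧
          ∀ i : Fin I, x i ≠ x istar → x i ≠ -x istar →
            Real.exp |⟪β, x i⟫ + γ| <
              (Finset.univ.sup' (Finset.univ_nonempty_iff.mpr (Fin.pos_iff_nonempty.mp hI))
                fun j => Real.exp |⟪β, x j⟫ + γ|) ∧
            ∀ u ∈ Set.Icc (0:ℝ) 1, ∀ u' ∈ Set.Icc (0:ℝ) 1,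
              (Real.exp |⟪β, x i⟫ + γ|)⁻¹ ≤ Real.exp ((⟪β, x i⟫ + γ) * (u - u')) ∧
              Real.exp ((⟪β, x i⟫ + γ) * (u - u')) ≤ Real.exp |⟪β, x i⟫ + γ| := by
  classical
  set E : Set (EuclideanSpace ℝ (Fin K)) :=
    (⋃ (i : Fin I) (j : Fin I) (_ : x i ≠ x j), {β | ⟪β, x i - x j⟫ = 0}) ∪
    (⋃ (i : Fin I) (j : Fin I) (_ : x i ≠ -x j), {β | ⟪β, x i + x j⟫ = -(2*γ)}) with hE
  refine ⟨E, ?_, ?_⟩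
  · rw [hE]
    refine le_antisymm (le_trans (measure_union_le _ _) ?_) (zero_le (a := (0 : ENNReal)) |>.trans (le_refl _) |> fun _ => zero_le)
    have h1 : MeasureTheory.volume
        (⋃ (i : Fin I) (j : Fin I) (_ : x i ≠ x j), {β : EuclideanSpace ℝ (Fin K) | ⟪β, x i - x j⟫ = 0}) = 0 := by
      refine MeasureTheory.measure_iUnion_null fun i => ?_
      refine MeasureTheory.measure_iUnion_null fun j => ?_
      refine MeasureTheory.measure_iUnion_null fun h => ?_
      exact null_hyperplane _ (sub_ne_zero.mpr h) 0
    have h2 : MeasureTheory.volume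
        (⋃ (i : Fin I) (j : Fin I) (_ : x i ≠ -x j), {β : EuclideanSpace ℝ (Fin K) | ⟪β, x i + x j⟫ = -(2*γ)}) = 0 := by
      refine MeasureTheory.measure_iUnion_null fun i => ?_
      refine MeasureTheory.measure_iUnion_null fun j => ?_
      refine MeasureTheory.measure_iUnion_null fun h => ?_
      refine null_hyperplane _ (fun hz => h ?_) _
      rw [add_eq_zero_iff_eq_neg] at hz
      exact hz
    rw [h1, h2, add_zero]
  · intro β hβ
    obtain ⟨istar, -, hstar⟩ := Finset.exists_mem_eq_sup' 
      (Finset.univ_nonempty_iff.mpr (Fin.pos_iff_nonempty.mp hI))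
      (fun j => Real.exp |⟪β, x j⟫ + γ|)
    refine ⟨istar, hstar.symm, fun i hne1 hne2 => ?_⟩
    have hne : |⟪β, x i⟫ + γ| ≠ |⟪β, x istar⟫ + γ| := by
      intro habs
      rcases abs_eq_abs.mp habs with h | h
      · have : ⟪β, x i - x istar⟫ = 0 := by
          rw [inner_sub_right]; linarith
        exact hβ (Or.inl (Set.mem_iUnion.mpr ⟨i, Set.mem_iUnion.mpr ⟨istar,
          Set.mem_iUnion.mpr ⟨hne1, this⟩⟩⟩))
      · have : ⟪β, x i + x istar⟫ = -(2*γ) := by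
          rw [inner_add_right]; linarith
        exact hβ (Or.inr (Set.mem_iUnion.mpr ⟨i, Set.mem_iUnion.mpr ⟨istar,
          Set.mem_iUnion.mpr ⟨hne2, this⟩⟩⟩))
    constructor
    · refine lt_of_le_of_ne (Finset.le_sup' (fun j => Real.exp |⟪β, x j⟫ + γ|) (Finset.mem_univ i)) ?_
      rw [hstar]
      exact fun h => hne (Real.exp_injective h)
    · intro u hu u' hu'
      set a := ⟪β, x i⟫ + γ
      have hdiff : |u - u'| ≤ 1 := by
        rw [abs_le]
        constructor <;> [linarith [hu.1, hu'.2]; linarith [hu.2, hu'.1]]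
      have hbound : |a * (u - u')| ≤ |a| := by
        rw [abs_mul]
        calc |a| * |u - u'| ≤ |a| * 1 := by
              exact mul_le_mul_of_nonneg_left hdiff (abs_nonneg a)
          _ = |a| := mul_one _
      rw [abs_le] at hbound
      constructor
      · rw [← Real.exp_neg]
        exact Real.exp_le_exp.mpr hbound.1
      · exact Real.exp_le_exp.mpr hbound.2
end

section
/- Let β̃, γ ∈ ℝ with γ ≠ 0, set λ = (β̃ + γ)/γ and Γ = max(exp(|γ|), exp(|β̃ + γ|)), and for x̃ ∈ [0,1] define Γ_λ(x̃) = Γ^{|(λ−1)x̃+1|} if |λ| ≤ 1 and Γ_λ(x̃) = Γ^{|(1−λ^{−1})x̃+λ^{−1}|} if |λ| > 1. Then for every x̃ ∈ [0,1] and all u, u′ ∈ [0,1], Γ_λ(x̃)^{−1} ≤ exp((β̃x̃ + γ)(u − u′)) ≤ Γ_λ(x̃); moreover these bounds are sharp in the sense that for every x̃ ∈ [0,1] there exist u, u′ ∈ [0,1] with exp((β̃x̃ + γ)(u − u′)) = Γ_λ(x̃). -/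
/-- The sharper sensitivity bound `Γ_λ(x̃)` of Theorem 2 of the paper:
`Γ ^ |(λ - 1) x̃ + 1|` if `|λ| ≤ 1`, and `Γ ^ |(1 - λ⁻¹) x̃ + λ⁻¹|` if `|λ| > 1`. -/
noncomputable def GammaLam (lam Γ xt : ℝ) : ℝ :=
  if |lam| ≤ 1 then Γ ^ |(lam - 1) * xt + 1| else Γ ^ |(1 - lam⁻¹) * xt + lam⁻¹|

lemma key (btil γ : ℝ) (hγ : γ ≠ 0) (lam Γ : ℝ)
    (hlam : lam = (btil + γ) / γ)
    (hΓ : Γ = max (Real.exp |γ|) (Real.exp |btil + γ|)) (xt : ℝ) :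
    GammaLam lam Γ xt = Real.exp |btil * xt + γ| := by
  have hlg : lam * γ = btil + γ := by rw [hlam, div_mul_cancel₀ _ hγ]
  unfold GammaLam
  split_ifs with h
  · have h1 : |btil + γ| ≤ |γ| := by
      rw [← hlg, abs_mul]
      nlinarith [abs_nonneg γ]
    have hΓ' : Γ = Real.exp |γ| := by
      rw [hΓ, max_eq_left (Real.exp_le_exp.mpr h1)]
    rw [hΓ', ← Real.exp_mul, ← abs_mul]
    have e : γ * ((lam - 1) * xt + 1) = btil * xt + γ := by linear_combination xt * hlg
    rw [e]
  · push_neg at h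
    have hlne : lam ≠ 0 := by
      intro h0; rw [h0] at h; simp at h; linarith
    have h1 : |γ| ≤ |btil + γ| := by
      rw [← hlg, abs_mul]
      nlinarith [abs_nonneg γ, abs_nonneg lam]
    have hΓ' : Γ = Real.exp |btil + γ| := by
      rw [hΓ, max_eq_right (Real.exp_le_exp.mpr h1)]
    rw [hΓ', ← hlg, ← Real.exp_mul, ← abs_mul]
    have e : lam * γ * ((1 - lam⁻¹) * xt + lam⁻¹) = btil * xt + γ := by
      field_simp
      linear_combination xt * hlg
    rw [e]

/-- main bound of Theorem 2: for every `x̃ ∈ [0,1]` and all `u, u' ∈ [0,1]`,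
`Γ_λ(x̃)⁻¹ ≤ exp ((β̃ x̃ + γ)(u - u')) ≤ Γ_λ(x̃)`, and the upper bound is attained for some
`u, u' ∈ [0,1]`. -/
theorem stmt8 (btil γ : ℝ) (hγ : γ ≠ 0) (lam Γ : ℝ)
    (hlam : lam = (btil + γ) / γ)
    (hΓ : Γ = max (Real.exp |γ|) (Real.exp |btil + γ|)) :
    ∀ xt ∈ Set.Icc (0:ℝ) 1,
      (∀ u ∈ Set.Icc (0:ℝ) 1, ∀ u' ∈ Set.Icc (0:ℝ) 1,
        (GammaLam lam Γ xt)⁻¹ ≤ Real.exp ((btil * xt + γ) * (u - u')) ∧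
        Real.exp ((btil * xt + γ) * (u - u')) ≤ GammaLam lam Γ xt) ∧
      ∃ u ∈ Set.Icc (0:ℝ) 1, ∃ u' ∈ Set.Icc (0:ℝ) 1,
        Real.exp ((btil * xt + γ) * (u - u')) = GammaLam lam Γ xt := by
  intro xt hxt
  rw [key btil γ hγ lam Γ hlam hΓ xt]
  constructor
  · intro u hu u' hu'
    have habs : |(btil * xt + γ) * (u - u')| ≤ |btil * xt + γ| := by
      rw [abs_mul]
      have : |u - u'| ≤ 1 := by
        rw [abs_le]; constructor <;> [linarith [hu.1, hu'.2]; linarith [hu.2, hu'.1]]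
      nlinarith [abs_nonneg (btil * xt + γ)]
    rw [abs_le] at habs
    constructor
    · rw [← Real.exp_neg]
      exact Real.exp_le_exp.mpr habs.1
    · exact Real.exp_le_exp.mpr habs.2
  · rcases le_or_gt 0 (btil * xt + γ) with hs | hs
    · exact ⟨1, by norm_num, 0, by norm_num, by rw [abs_of_nonneg hs]; ring_nf⟩
    · exact ⟨0, by norm_num, 1, by norm_num, by rw [abs_of_neg hs]; ring_nf⟩
end

section
/- Let β̃, γ ∈ ℝ with γ ≠ 0, set λ = (β̃ + γ)/γ and Γ = max(exp(|γ|), exp(|β̃ + γ|)), and for x̃ ∈ [0,1] define Γ_λ(x̃) = Γ^{|(λ−1)x̃+1|} if |λ| ≤ 1 and Γ_λ(x̃) = Γ^{|(1−λ^{−1})x̃+λ^{−1}|} if |λ| > 1. Then for every x̃ ∈ [0,1], Γ_λ(x̃) = Γ holds if and only if at least one of the following three conditions holds: (a) λ = 1; (b) |λ| ≤ 1 and x̃ = 0; (c) |λ| ≥ 1 and x̃ = 1. -/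
/-- equality characterization in Theorem 2: for every `x̃ ∈ [0,1]`,
`Γ_λ(x̃) = Γ` iff (a) `λ = 1`, or (b) `|λ| ≤ 1` and `x̃ = 0`, or (c) `|λ| ≥ 1` and `x̃ = 1`. -/
theorem stmt10 (btil γ : ℝ) (hγ : γ ≠ 0) (lam Γ : ℝ)
    (hlam : lam = (btil + γ) / γ)
    (hΓ : Γ = max (Real.exp |γ|) (Real.exp |btil + γ|)) :
    ∀ xt ∈ Set.Icc (0:ℝ) 1,
      (GammaLam lam Γ xt = Γ ↔
        lam = 1 ∨ (|lam| ≤ 1 ∧ xt = 0) ∨ (1 ≤ |lam| ∧ xt = 1)) := by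
  have hΓ1 : 1 < Γ := by
    rw [hΓ]
    have h1 : (1:ℝ) < Real.exp |γ| := by
      rw [show (1:ℝ) = Real.exp 0 by simp]
      exact Real.exp_lt_exp.mpr (abs_pos.mpr hγ)
    exact lt_of_lt_of_le h1 (le_max_left _ _)
  have key : ∀ a : ℝ, Γ ^ a = Γ ↔ a = 1 := by
    intro a
    constructor
    · intro h
      have h' : Γ ^ a = Γ ^ (1:ℝ) := by rw [h, Real.rpow_one]
      by_contra hne
      rcases lt_or_gt_of_ne hne with hlt | hgt
      · have := Real.rpow_lt_rpow_left_iff hΓ1 |>.mpr hlt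
        rw [h'] at this; exact lt_irrefl _ this
      · have := Real.rpow_lt_rpow_left_iff hΓ1 |>.mpr hgt
        rw [h'] at this; exact lt_irrefl _ this
    · rintro rfl; exact Real.rpow_one Γ
  rintro xt ⟨h0, h1⟩
  unfold GammaLam
  split_ifs with hl
  · -- |lam| ≤ 1
    rw [key]
    rw [abs_eq (by norm_num : (0:ℝ) ≤ 1)]
    have hlam1 : -1 ≤ lam := neg_le_of_abs_le hl
    have hlam2 : lam ≤ 1 := le_of_abs_le hl
    constructor
    · rintro (h | h)
      · have : (lam - 1) * xt = 0 := by linarith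
        rcases mul_eq_zero.mp this with h' | h'
        · exact Or.inl (by linarith)
        · exact Or.inr (Or.inl ⟨hl, h'⟩)
      · -- (lam-1)*xt = -2 forces lam = -1 and xt = 1
        have hL : lam = -1 := by nlinarith
        have hx : xt = 1 := by nlinarith
        refine Or.inr (Or.inr ⟨?_, hx⟩)
        rw [hL]; norm_num
    · rintro (rfl | ⟨-, rfl⟩ | ⟨hge, rfl⟩)
      · left; ring
      · left; ring
      · have : |lam| = 1 := le_antisymm hl hge
        rcases abs_eq (by norm_num : (0:ℝ) ≤ 1) |>.mp this with h | h
        · left; rw [h]; ring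
        · right; rw [h]; ring
  · -- 1 < |lam|
    push_neg at hl
    rw [key]
    have hinv : |lam⁻¹| < 1 := by
      rw [abs_inv]
      exact inv_lt_one_of_one_lt₀ hl
    have hinv1 : -1 < lam⁻¹ := by
      have := neg_abs_le lam⁻¹; linarith [abs_nonneg lam⁻¹, hinv,
        (abs_lt.mp hinv).1]
    have hinv2 : lam⁻¹ < 1 := (abs_lt.mp hinv).2
    rw [abs_eq (by norm_num : (0:ℝ) ≤ 1)]
    have hlamne1 : lam ≠ 1 := by
      intro h; rw [h] at hl; simp at hl
    constructor
    · rintro (h | h)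
      · -- (1 - lam⁻¹) * xt + lam⁻¹ = 1
        have hfac : (1 - lam⁻¹) * (xt - 1) = 0 := by ring_nf; linarith
        rcases mul_eq_zero.mp hfac with h' | h'
        · exfalso; nlinarith
        · exact Or.inr (Or.inr ⟨le_of_lt hl, by linarith⟩)
      · exfalso; nlinarith
    · rintro (rfl | ⟨hle, -⟩ | ⟨-, rfl⟩)
      · exact absurd hlamne1 (by simp)
      · exact absurd hle (not_le.mpr hl)
      · left; ring
end

section
/- Let β̃, γ ∈ ℝ with γ ≠ 0, set λ = (β̃ + γ)/γ and Γ = max(exp(|γ|), exp(|β̃ + γ|)), and suppose |λ| = 1. Then for each x ∈ {0, 1} there exist u, u′ ∈ [0,1] such that exp((β̃x + γ)(u − u′)) = Γ, and for all u, u′ ∈ [0,1] one has Γ^{−1} ≤ exp((β̃x + γ)(u − u′)) ≤ Γ. -/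
lemma aux_case (c : ℝ) :
    (∃ u ∈ Set.Icc (0:ℝ) 1, ∃ u' ∈ Set.Icc (0:ℝ) 1,
        Real.exp (c * (u - u')) = Real.exp |c|) ∧
      ∀ u ∈ Set.Icc (0:ℝ) 1, ∀ u' ∈ Set.Icc (0:ℝ) 1,
        (Real.exp |c|)⁻¹ ≤ Real.exp (c * (u - u')) ∧
        Real.exp (c * (u - u')) ≤ Real.exp |c| := by
  constructor
  · rcases le_or_gt 0 c with h | h
    · exact ⟨1, by norm_num, 0, by norm_num, by rw [abs_of_nonneg h]; norm_num⟩
    · exact ⟨0, by norm_num, 1, by norm_num, by rw [abs_of_neg h]; ring_nf⟩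
  · rintro u ⟨hu0, hu1⟩ u' ⟨hu'0, hu'1⟩
    have hd : |u - u'| ≤ 1 := abs_le.2 ⟨by linarith, by linarith⟩
    have hb : |c * (u - u')| ≤ |c| := by
      rw [abs_mul]
      calc |c| * |u - u'| ≤ |c| * 1 := by
            exact mul_le_mul_of_nonneg_left hd (abs_nonneg c)
        _ = |c| := mul_one _
    obtain ⟨hl, hr⟩ := abs_le.1 hb
    constructor
    · rw [← Real.exp_neg]
      exact Real.exp_le_exp.2 hl
    · exact Real.exp_le_exp.2 hr

/-- Corollary 1, case 1: with `λ = (β̃ + γ)/γ` and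
`Γ = max (exp |γ|) (exp |β̃ + γ|)`, if `|λ| = 1` then for each binary covariate value
`x ∈ {0, 1}` there exist `u, u' ∈ [0,1]` with `exp ((β̃ x + γ)(u - u')) = Γ`, and for all
`u, u' ∈ [0,1]`, `Γ⁻¹ ≤ exp ((β̃ x + γ)(u - u')) ≤ Γ`. -/
theorem stmt11 (btil γ : ℝ) (hγ : γ ≠ 0) (lam Γ : ℝ)
    (hlam : lam = (btil + γ) / γ)
    (hΓ : Γ = max (Real.exp |γ|) (Real.exp |btil + γ|))
    (habs : |lam| = 1) :
    ∀ x ∈ ({0, 1} : Set ℝ),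
      (∃ u ∈ Set.Icc (0:ℝ) 1, ∃ u' ∈ Set.Icc (0:ℝ) 1,
        Real.exp ((btil * x + γ) * (u - u')) = Γ) ∧
      ∀ u ∈ Set.Icc (0:ℝ) 1, ∀ u' ∈ Set.Icc (0:ℝ) 1,
        Γ⁻¹ ≤ Real.exp ((btil * x + γ) * (u - u')) ∧
        Real.exp ((btil * x + γ) * (u - u')) ≤ Γ := by
  have heq : |btil + γ| = |γ| := by
    have : |btil + γ| / |γ| = 1 := by
      rw [← abs_div, ← hlam] at *
      exact habs
    field_simp at this
    linarith [this]
  have hΓ' : Γ = Real.exp |γ| := by rw [hΓ, heq, max_self]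
  rintro x (rfl | rfl)
  · simpa [hΓ'] using aux_case γ
  · have : btil * 1 + γ = btil + γ := by ring
    rw [this, hΓ, heq, max_self, ← heq]
    exact aux_case (btil + γ)
end

section
/- Let β̃, γ ∈ ℝ with γ ≠ 0, set λ = (β̃ + γ)/γ and Γ = max(exp(|γ|), exp(|β̃ + γ|)), and suppose |λ| < 1. Then: (i) there exist u, u′ ∈ [0,1] with exp(γ(u − u′)) = Γ (sharpness of the Rosenbaum bounds at x = 0); and (ii) for all u, u′ ∈ [0,1], Γ^{−|λ|} ≤ exp((β̃ + γ)(u − u′)) ≤ Γ^{|λ|}, and there exist u, u′ ∈ [0,1] with exp((β̃ + γ)(u − u′)) = Γ^{|λ|}. -/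
lemma sign_attain (a : ℝ) : ∃ u ∈ Set.Icc (0:ℝ) 1, ∃ u' ∈ Set.Icc (0:ℝ) 1,
    a * (u - u') = |a| := by
  rcases le_or_gt 0 a with h | h
  · exact ⟨1, by norm_num, 0, by norm_num, by rw [abs_of_nonneg h]; ring⟩
  · exact ⟨0, by norm_num, 1, by norm_num, by rw [abs_of_neg h]; ring⟩

/-- Corollary 1, case 2: with `λ = (β̃ + γ)/γ` and
`Γ = max (exp |γ|) (exp |β̃ + γ|)`, if `|λ| < 1` then (i) there exist `u, u' ∈ [0,1]` with
`exp (γ (u - u')) = Γ` (sharpness at `x = 0`); and (ii) for all `u, u' ∈ [0,1]`,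
`Γ ^ (-|λ|) ≤ exp ((β̃ + γ)(u - u')) ≤ Γ ^ |λ|`, the upper bound being attained. -/
theorem stmt12 (btil γ : ℝ) (hγ : γ ≠ 0) (lam Γ : ℝ)
    (hlam : lam = (btil + γ) / γ)
    (hΓ : Γ = max (Real.exp |γ|) (Real.exp |btil + γ|))
    (habs : |lam| < 1) :
    (∃ u ∈ Set.Icc (0:ℝ) 1, ∃ u' ∈ Set.Icc (0:ℝ) 1,
      Real.exp (γ * (u - u')) = Γ) ∧
    (∀ u ∈ Set.Icc (0:ℝ) 1, ∀ u' ∈ Set.Icc (0:ℝ) 1,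
      Γ ^ (-|lam|) ≤ Real.exp ((btil + γ) * (u - u')) ∧
      Real.exp ((btil + γ) * (u - u')) ≤ Γ ^ |lam|) ∧
    (∃ u ∈ Set.Icc (0:ℝ) 1, ∃ u' ∈ Set.Icc (0:ℝ) 1,
      Real.exp ((btil + γ) * (u - u')) = Γ ^ |lam|) := by
  have hlamabs : |lam| = |btil + γ| / |γ| := by
    rw [hlam, abs_div]
  have hγpos : (0:ℝ) < |γ| := abs_pos.mpr hγ
  have hlt : |btil + γ| < |γ| := by
    have := habs
    rw [hlamabs, div_lt_one hγpos] at this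
    exact this
  have hΓ' : Γ = Real.exp |γ| := by
    rw [hΓ, max_eq_left (Real.exp_le_exp.mpr hlt.le)]
  have hpow : ∀ t : ℝ, Γ ^ t = Real.exp (|γ| * t) := by
    intro t
    rw [hΓ', Real.exp_mul]
  have hkey : |γ| * |lam| = |btil + γ| := by
    rw [hlamabs]; field_simp
  refine ⟨?_, ?_, ?_⟩
  · obtain ⟨u, hu, u', hu', h⟩ := sign_attain γ
    exact ⟨u, hu, u', hu', by rw [h, hΓ']⟩
  · rintro u ⟨hu0, hu1⟩ u' ⟨hu0', hu1'⟩
    have hbound : |(btil + γ) * (u - u')| ≤ |btil + γ| := by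
      rw [abs_mul]
      calc |btil + γ| * |u - u'| ≤ |btil + γ| * 1 := by
            apply mul_le_mul_of_nonneg_left _ (abs_nonneg _)
            rw [abs_le]; constructor <;> linarith
        _ = |btil + γ| := mul_one _
    rw [abs_le] at hbound
    constructor
    · rw [hpow, mul_neg, hkey]
      exact Real.exp_le_exp.mpr hbound.1
    · rw [hpow, hkey]
      exact Real.exp_le_exp.mpr hbound.2
  · obtain ⟨u, hu, u', hu', h⟩ := sign_attain (btil + γ)
    exact ⟨u, hu, u', hu', by rw [h, hpow, hkey]⟩
end

section
/- Let β̃, γ ∈ ℝ with γ ≠ 0, set λ = (β̃ + γ)/γ and Γ = max(exp(|γ|), exp(|β̃ + γ|)), and suppose |λ| > 1. Then: (i) there exist u, u′ ∈ [0,1] with exp((β̃ + γ)(u − u′)) = Γ (sharpness of the Rosenbaum bounds at x = 1); and (ii) for all u, u′ ∈ [0,1], Γ^{−1/|λ|} ≤ exp(γ(u − u′)) ≤ Γ^{1/|λ|}, and there exist u, u′ ∈ [0,1] with exp(γ(u − u′)) = Γ^{1/|λ|}. -/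
/-- Corollary 1, case 3: with `λ = (β̃ + γ)/γ` and
`Γ = max (exp |γ|) (exp |β̃ + γ|)`, if `|λ| > 1` then (i) there exist `u, u' ∈ [0,1]` with
`exp ((β̃ + γ)(u - u')) = Γ` (sharpness at `x = 1`); and (ii) for all `u, u' ∈ [0,1]`,
`Γ ^ (-(1/|λ|)) ≤ exp (γ (u - u')) ≤ Γ ^ (1/|λ|)`, the upper bound being attained. -/
theorem stmt13 (btil γ : ℝ) (hγ : γ ≠ 0) (lam Γ : ℝ)
    (hlam : lam = (btil + γ) / γ)
    (hΓ : Γ = max (Real.exp |γ|) (Real.exp |btil + γ|))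
    (habs : 1 < |lam|) :
    (∃ u ∈ Set.Icc (0:ℝ) 1, ∃ u' ∈ Set.Icc (0:ℝ) 1,
      Real.exp ((btil + γ) * (u - u')) = Γ) ∧
    (∀ u ∈ Set.Icc (0:ℝ) 1, ∀ u' ∈ Set.Icc (0:ℝ) 1,
      Γ ^ (-(1 / |lam|)) ≤ Real.exp (γ * (u - u')) ∧
      Real.exp (γ * (u - u')) ≤ Γ ^ (1 / |lam|)) ∧
    (∃ u ∈ Set.Icc (0:ℝ) 1, ∃ u' ∈ Set.Icc (0:ℝ) 1,
      Real.exp (γ * (u - u')) = Γ ^ (1 / |lam|)) := by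
  set b := btil + γ with hb
  have hγ0 : (0:ℝ) < |γ| := abs_pos.mpr hγ
  have hlamabs : |lam| = |b| / |γ| := by rw [hlam, abs_div]
  have hblt : |γ| < |b| := by
    rw [hlamabs, lt_div_iff₀ hγ0, one_mul] at habs
    exact habs
  have hb0 : (0:ℝ) < |b| := lt_trans hγ0 hblt
  have hΓ' : Γ = Real.exp |b| := by
    rw [hΓ, max_eq_right (Real.exp_le_exp.mpr hblt.le)]
  have hinv : 1 / |lam| = |γ| / |b| := by
    rw [hlamabs, one_div_div]
  have hpow : Γ ^ (1 / |lam|) = Real.exp |γ| := by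
    rw [hΓ', hinv, Real.rpow_def_of_pos (Real.exp_pos _), Real.log_exp]
    congr 1; field_simp
  have hpowneg : Γ ^ (-(1 / |lam|)) = Real.exp (-|γ|) := by
    rw [hΓ', hinv, Real.rpow_def_of_pos (Real.exp_pos _), Real.log_exp]
    congr 1; field_simp
  refine ⟨?_, ?_, ?_⟩
  · rcases le_or_gt 0 b with hbs | hbs
    · exact ⟨1, ⟨zero_le_one, le_refl 1⟩, 0, ⟨le_refl 0, zero_le_one⟩, by
        rw [hΓ', abs_of_nonneg hbs]; ring_nf⟩
    · exact ⟨0, ⟨le_refl 0, zero_le_one⟩, 1, ⟨zero_le_one, le_refl 1⟩, by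
        rw [hΓ', abs_of_neg hbs]; ring_nf⟩
  · intro u hu u' hu'
    have habsle : |γ * (u - u')| ≤ |γ| := by
      rw [abs_mul]
      have : |u - u'| ≤ 1 := by
        rw [abs_sub_le_iff]
        constructor <;> linarith [hu.1, hu.2, hu'.1, hu'.2]
      calc |γ| * |u - u'| ≤ |γ| * 1 := by
            exact mul_le_mul_of_nonneg_left this (abs_nonneg _)
        _ = |γ| := mul_one _
    rw [abs_le] at habsle
    exact ⟨by rw [hpowneg]; exact Real.exp_le_exp.mpr habsle.1,
      by rw [hpow]; exact Real.exp_le_exp.mpr habsle.2⟩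
  · rcases le_or_gt 0 γ with hgs | hgs
    · exact ⟨1, ⟨zero_le_one, le_refl 1⟩, 0, ⟨le_refl 0, zero_le_one⟩, by
        rw [hpow, abs_of_nonneg hgs]; ring_nf⟩
    · exact ⟨0, ⟨le_refl 0, zero_le_one⟩, 1, ⟨zero_le_one, le_refl 1⟩, by
        rw [hpow, abs_of_neg hgs]; ring_nf⟩
end

section
/- Let c₁, c₂ ∈ {0, 1}, θ ∈ ℝ, and u₁, u₂ ∈ [0,1]. Define p = (c₁·exp(θ(u₁ − u₂)) + c₂) / (1 + exp(θ(u₁ − u₂))), and define p̃ = 0 if c₁ = c₂ = 0, p̃ = 1 if c₁ = c₂ = 1, and p̃ = exp(|θ|)/(1 + exp(|θ|)) if c₁ ≠ c₂. Then p ≤ p̃, and for each choice of c₁, c₂, θ there exist u₁, u₂ ∈ [0,1] attaining p = p̃. -/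
/-- The worst-case contribution probability `p̃`: `0` if `c₁ = c₂ = 0`, `1` if
`c₁ = c₂ = 1`, and `exp |θ| / (1 + exp |θ|)` if `c₁ ≠ c₂`. -/
noncomputable def ptilde (c₁ c₂ θ : ℝ) : ℝ :=
  if c₁ = 0 ∧ c₂ = 0 then 0
  else if c₁ = 1 ∧ c₂ = 1 then 1
  else Real.exp |θ| / (1 + Real.exp |θ|)

lemma logistic_mono {x y : ℝ} (h : x ≤ y) :
    Real.exp x / (1 + Real.exp x) ≤ Real.exp y / (1 + Real.exp y) := by
  have hx := Real.exp_pos x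
  have hy := Real.exp_pos y
  rw [div_le_div_iff₀ (by linarith) (by linarith)]
  nlinarith [Real.exp_le_exp.mpr h]

lemma one_div_logistic (t : ℝ) :
    1 / (1 + Real.exp t) = Real.exp (-t) / (1 + Real.exp (-t)) := by
  have ht := Real.exp_pos t
  have h : Real.exp (-t) * Real.exp t = 1 := by
    rw [← Real.exp_add]; simp
  have hnt := Real.exp_pos (-t)
  rw [div_eq_div_iff (by linarith) (by linarith)]
  nlinarith

/-- with `p = (c₁ exp (θ(u₁ - u₂)) + c₂) / (1 + exp (θ(u₁ - u₂)))` for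
`c₁, c₂ ∈ {0,1}` and `u₁, u₂ ∈ [0,1]`, one has `p ≤ p̃`, and `p = p̃` is attained for some
choice of `u₁, u₂ ∈ [0,1]`. -/
theorem stmt14 (c₁ c₂ θ : ℝ) (hc₁ : c₁ = 0 ∨ c₁ = 1) (hc₂ : c₂ = 0 ∨ c₂ = 1)
    (u₁ u₂ : ℝ) (hu₁ : u₁ ∈ Set.Icc (0:ℝ) 1) (hu₂ : u₂ ∈ Set.Icc (0:ℝ) 1) :
    (c₁ * Real.exp (θ * (u₁ - u₂)) + c₂) / (1 + Real.exp (θ * (u₁ - u₂))) ≤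
      ptilde c₁ c₂ θ ∧
    ∃ v₁ ∈ Set.Icc (0:ℝ) 1, ∃ v₂ ∈ Set.Icc (0:ℝ) 1,
      (c₁ * Real.exp (θ * (v₁ - v₂)) + c₂) / (1 + Real.exp (θ * (v₁ - v₂))) =
        ptilde c₁ c₂ θ := by
  obtain ⟨h1, h2⟩ := hu₁
  obtain ⟨h3, h4⟩ := hu₂
  have hd : θ * (u₁ - u₂) ≤ |θ| := by
    rcases abs_cases θ with ⟨he, hp⟩ | ⟨he, hn⟩ <;> nlinarith
  have hnd : -(θ * (u₁ - u₂)) ≤ |θ| := by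
    rcases abs_cases θ with ⟨he, hp⟩ | ⟨he, hn⟩ <;> nlinarith
  have hpos : (0:ℝ) < 1 + Real.exp (θ * (u₁ - u₂)) := by positivity
  -- attainment points: sign of θ
  have hatt : ∃ v₁ ∈ Set.Icc (0:ℝ) 1, ∃ v₂ ∈ Set.Icc (0:ℝ) 1,
      θ * (v₁ - v₂) = |θ| := by
    rcases le_or_gt 0 θ with h | h
    · exact ⟨1, by norm_num, 0, by norm_num, by rw [abs_of_nonneg h]; ring⟩
    · exact ⟨0, by norm_num, 1, by norm_num, by rw [abs_of_neg h]; ring⟩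
  have hattn : ∃ v₁ ∈ Set.Icc (0:ℝ) 1, ∃ v₂ ∈ Set.Icc (0:ℝ) 1,
      θ * (v₁ - v₂) = -|θ| := by
    rcases le_or_gt 0 θ with h | h
    · exact ⟨0, by norm_num, 1, by norm_num, by rw [abs_of_nonneg h]; ring⟩
    · exact ⟨1, by norm_num, 0, by norm_num, by rw [abs_of_neg h]; ring⟩
  rcases hc₁ with rfl | rfl <;> rcases hc₂ with rfl | rfl
  · -- 0,0
    rw [show ptilde 0 0 θ = 0 by simp [ptilde]]
    constructor
    · simp
    · refine ⟨0, by norm_num, 0, by norm_num, ?_⟩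
      simp
  · -- 0,1
    have hpt : ptilde 0 1 θ = Real.exp |θ| / (1 + Real.exp |θ|) := by
      simp [ptilde]
    rw [hpt]
    constructor
    · rw [zero_mul, zero_add, one_div_logistic]
      exact logistic_mono hnd
    · obtain ⟨v₁, hv₁, v₂, hv₂, hv⟩ := hattn
      refine ⟨v₁, hv₁, v₂, hv₂, ?_⟩
      rw [hv, zero_mul, zero_add, one_div_logistic, neg_neg]
  · -- 1,0
    have hpt : ptilde 1 0 θ = Real.exp |θ| / (1 + Real.exp |θ|) := by
      simp [ptilde]
    rw [hpt]
    constructor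
    · rw [one_mul, add_zero]
      exact logistic_mono hd
    · obtain ⟨v₁, hv₁, v₂, hv₂, hv⟩ := hatt
      refine ⟨v₁, hv₁, v₂, hv₂, ?_⟩
      rw [hv, one_mul, add_zero]
  · -- 1,1
    have hpt : ptilde 1 1 θ = 1 := by simp [ptilde]
    rw [hpt]
    constructor
    · rw [one_mul, div_le_one hpos]; linarith
    · refine ⟨0, by norm_num, 0, by norm_num, ?_⟩
      rw [one_mul, div_eq_one_iff_eq (by positivity)]
      ring
end

section
/- Let n ≥ 1 and t ∈ ℝ. For each i ∈ {1,…,n}, let c_{i1}, c_{i2} ∈ {0,1}, d_i ≥ 0, θ_i ∈ ℝ, and u_{i1}, u_{i2} ∈ [0,1], and let Γ > 1 satisfy exp(|θ_i|) ≤ Γ for all i. Define p_i = (c_{i1}·exp(θ_i(u_{i1} − u_{i2})) + c_{i2}) / (1 + exp(θ_i(u_{i1} − u_{i2}))); define p̃_i = 0 if c_{i1} = c_{i2} = 0, p̃_i = 1 if c_{i1} = c_{i2} = 1, and p̃_i = exp(|θ_i|)/(1 + exp(|θ_i|)) if c_{i1} ≠ c_{i2}; and define p̄_i = 0 if c_{i1}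 = c_{i2} = 0, p̄_i = 1 if c_{i1} = c_{i2} = 1, and p̄_i = Γ/(1 + Γ) if c_{i1} ≠ c_{i2}. Let F_{d,t}(p) = Σ_{S ⊆ {1,…,n} : Σ_{i∈S} d_i ≥ t} (Π_{i∈S} p_i)(Π_{i∉S} (1 − p_i)). Then F_{d,t}(p) ≤ F_{d,t}(p̃) ≤ F_{d,t}(p̄), and there exists a choice of u_{i1}, u_{i2} ∈ [0,1] (for i = 1,…,n) achieving F_{d,t}(p) = F_{d,t}(p̃). -/
open Finset

/-- The tail function `F_{d,t}(p)`: the probability that `∑ i, d i * B i ≥ t` for independent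
Bernoulli variables `B i` with success probabilities `p i`, written as an explicit sum over
subsets `S ⊆ {1,…,n}`. -/
noncomputable def tailF {n : ℕ} (d : Fin n → ℝ) (t : ℝ) (p : Fin n → ℝ) : ℝ :=
  ∑ S ∈ Finset.univ.filter (fun S : Finset (Fin n) => t ≤ ∑ i ∈ S, d i),
    (∏ i ∈ S, p i) * ∏ i ∈ Sᶜ, (1 - p i)

/-- The Rosenbaum worst-case contribution probability `p̄ᵢ`: `0` if `c₁ = c₂ = 0`, `1` if
`c₁ = c₂ = 1`, and `Γ / (1 + Γ)` if `c₁ ≠ c₂`. -/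
noncomputable def pbar (c₁ c₂ Γ : ℝ) : ℝ :=
  if c₁ = 0 ∧ c₂ = 0 then 0
  else if c₁ = 1 ∧ c₂ = 1 then 1
  else Γ / (1 + Γ)

lemma tailF_eq_sum_erase {n : ℕ} (d : Fin n → ℝ) (t : ℝ) (p : Fin n → ℝ) (i : Fin n) :
    tailF d t p =
    ∑ S ∈ ((univ : Finset (Fin n)).erase i).powerset,
      ((∏ j ∈ S, p j) * ∏ j ∈ Sᶜ.erase i, (1 - p j)) *
        ((if t ≤ ∑ j ∈ insert i S, d j then p i else 0) +
         (if t ≤ ∑ j ∈ S, d j then 1 - p i else 0)) := by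
  rw [tailF, Finset.sum_filter]
  have huniv : (univ : Finset (Finset (Fin n))) = (univ : Finset (Fin n)).powerset :=
    (Finset.powerset_univ).symm
  conv_lhs => rw [huniv, ← Finset.insert_erase (Finset.mem_univ i),
    Finset.sum_powerset_insert (Finset.notMem_erase i univ)]
  rw [← Finset.sum_add_distrib]
  apply Finset.sum_congr rfl
  intro S hS
  have hiS : i ∉ S := fun h => (Finset.notMem_erase i univ) (Finset.mem_powerset.mp hS h)
  have hiSc : i ∈ Sᶜ := Finset.mem_compl.mpr hiS
  have h1 : (∏ j ∈ Sᶜ, (1 - p j)) = (1 - p i) * ∏ j ∈ Sᶜ.erase i, (1 - p j) :=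
    (Finset.mul_prod_erase _ _ hiSc).symm
  have h2 : (∏ j ∈ insert i S, p j) = p i * ∏ j ∈ S, p j := Finset.prod_insert hiS
  have h3 : (insert i S)ᶜ = Sᶜ.erase i := Finset.compl_insert
  rw [h1, h2, h3]
  split_ifs <;> ring

lemma tailF_update_le {n : ℕ} (d : Fin n → ℝ) (hd : ∀ i, 0 ≤ d i) (t : ℝ)
    (p : Fin n → ℝ) (hp0 : ∀ j, 0 ≤ p j) (hp1 : ∀ j, p j ≤ 1)
    (i : Fin n) (x : ℝ) (hx1 : p i ≤ x) (hx2 : x ≤ 1) :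
    tailF d t p ≤ tailF d t (Function.update p i x) := by
  rw [tailF_eq_sum_erase d t p i, tailF_eq_sum_erase d t (Function.update p i x) i]
  apply Finset.sum_le_sum
  intro S hS
  have hiS : i ∉ S := fun h => (Finset.notMem_erase i univ) (Finset.mem_powerset.mp hS h)
  have hupd₁ : (∏ j ∈ S, Function.update p i x j) = ∏ j ∈ S, p j := by
    apply Finset.prod_congr rfl
    intro j hj
    exact Function.update_of_ne (by rintro rfl; exact hiS hj) _ _
  have hupd₂ : (∏ j ∈ Sᶜ.erase i, (1 - Function.update p i x j)) =
      ∏ j ∈ Sᶜ.erase i, (1 - p j) := by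
    apply Finset.prod_congr rfl
    intro j hj
    rw [Function.update_of_ne (Finset.ne_of_mem_erase hj) _ _]
  rw [hupd₁, hupd₂, Function.update_self]
  have hg : 0 ≤ (∏ j ∈ S, p j) * ∏ j ∈ Sᶜ.erase i, (1 - p j) := by
    apply mul_nonneg
    · exact Finset.prod_nonneg fun j _ => hp0 j
    · exact Finset.prod_nonneg fun j _ => by linarith [hp1 j]
  apply mul_le_mul_of_nonneg_left _ hg
  have himp : (t ≤ ∑ j ∈ S, d j) → (t ≤ ∑ j ∈ insert i S, d j) := by
    intro h
    rw [Finset.sum_insert hiS]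
    linarith [hd i]
  split_ifs with h1 h2 h2 <;> first | linarith | exact absurd (himp h2) h1

lemma tailF_mono {n : ℕ} (d : Fin n → ℝ) (hd : ∀ i, 0 ≤ d i) (t : ℝ)
    (p q : Fin n → ℝ) (hp0 : ∀ i, 0 ≤ p i) (hpq : ∀ i, p i ≤ q i) (hq1 : ∀ i, q i ≤ 1) :
    tailF d t p ≤ tailF d t q := by
  have key : ∀ s : Finset (Fin n),
      tailF d t p ≤ tailF d t (fun i => if i ∈ s then q i else p i) := by
    intro s
    induction s using Finset.induction_on with
    | empty => simp
    | @insert a s ha ih =>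
      have heq : (fun i => if i ∈ insert a s then q i else p i) =
          Function.update (fun i => if i ∈ s then q i else p i) a (q a) := by
        funext j
        by_cases hj : j = a
        · subst hj; simp
        · simp [Function.update_of_ne hj, Finset.mem_insert, hj]
      rw [heq]
      refine le_trans ih (tailF_update_le d hd t _ ?_ ?_ a (q a) ?_ (hq1 a))
      · intro j
        by_cases hj : j ∈ s <;> simp [hj]
        · linarith [hp0 j, hpq j]
        · exact hp0 j
      · intro j
        by_cases hj : j ∈ s <;> simp [hj]
        · exact hq1 j
        · linarith [hpq j, hq1 j]
      · simp [ha]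
        exact hpq a
  have := key Finset.univ
  simpa using this

lemma p_nonneg (c₁ c₂ e : ℝ) (hc₁ : c₁ = 0 ∨ c₁ = 1) (hc₂ : c₂ = 0 ∨ c₂ = 1) (he : 0 < e) :
    0 ≤ (c₁ * e + c₂) / (1 + e) := by
  apply div_nonneg _ (by linarith)
  rcases hc₁ with h | h <;> rcases hc₂ with h' | h' <;> subst h <;> subst h' <;> nlinarith

lemma ptilde_nonneg (c₁ c₂ θ : ℝ) : 0 ≤ ptilde c₁ c₂ θ := by
  unfold ptilde
  split_ifs with h1 h2
  · norm_num
  · norm_num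
  · positivity

lemma ptilde_le_one (c₁ c₂ θ : ℝ) : ptilde c₁ c₂ θ ≤ 1 := by
  unfold ptilde
  have h := Real.exp_pos |θ|
  split_ifs with h1 h2
  · norm_num
  · norm_num
  · rw [div_le_one (by linarith)]; linarith

lemma pbar_le_one (c₁ c₂ Γ : ℝ) (hΓ : 1 < Γ) : pbar c₁ c₂ Γ ≤ 1 := by
  unfold pbar
  split_ifs with h1 h2
  · norm_num
  · norm_num
  · rw [div_le_one (by linarith)]; linarith

lemma p_le_ptilde (c₁ c₂ θ Δ : ℝ) (hc₁ : c₁ = 0 ∨ c₁ = 1) (hc₂ : c₂ = 0 ∨ c₂ = 1)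
    (hΔ : |Δ| ≤ 1) :
    (c₁ * Real.exp (θ * Δ) + c₂) / (1 + Real.exp (θ * Δ)) ≤ ptilde c₁ c₂ θ := by
  set e := Real.exp (θ * Δ) with he
  have hepos : 0 < e := Real.exp_pos _
  have hE : (0:ℝ) < Real.exp |θ| := Real.exp_pos _
  have hub : θ * Δ ≤ |θ| := by
    calc θ * Δ ≤ |θ * Δ| := le_abs_self _
    _ = |θ| * |Δ| := abs_mul _ _
    _ ≤ |θ| * 1 := by nlinarith [abs_nonneg θ]
    _ = |θ| := mul_one _
  have hlb : -|θ| ≤ θ * Δ := by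
    have : |θ * Δ| ≤ |θ| := by
      rw [abs_mul]; nlinarith [abs_nonneg θ]
    linarith [neg_abs_le (θ * Δ)]
  have heE : e ≤ Real.exp |θ| := Real.exp_le_exp.mpr hub
  rcases hc₁ with h1 | h1 <;> rcases hc₂ with h2 | h2 <;> subst h1 <;> subst h2
  · -- c₁ = 0, c₂ = 0
    unfold ptilde
    rw [if_pos (⟨rfl, rfl⟩ : (0:ℝ) = 0 ∧ (0:ℝ) = 0), zero_mul, zero_add, zero_div]
  · -- c₁ = 0, c₂ = 1
    have hcond1 : ¬((0:ℝ) = 0 ∧ (1:ℝ) = 0) := by norm_num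
    have hcond2 : ¬((0:ℝ) = 1 ∧ (1:ℝ) = 1) := by norm_num
    unfold ptilde
    rw [if_neg hcond1, if_neg hcond2, zero_mul, zero_add, div_le_div_iff₀ (by linarith) (by linarith)]
    have h1e : (1:ℝ) ≤ Real.exp |θ| * e := by
      rw [he, ← Real.exp_add]
      exact Real.one_le_exp (by linarith)
    nlinarith
  · -- c₁ = 1, c₂ = 0
    have hcond1 : ¬((1:ℝ) = 0 ∧ (0:ℝ) = 0) := by norm_num
    have hcond2 : ¬((1:ℝ) = 1 ∧ (0:ℝ) = 1) := by norm_num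
    unfold ptilde
    rw [if_neg hcond1, if_neg hcond2, one_mul, add_zero, div_le_div_iff₀ (by linarith) (by linarith)]
    nlinarith
  · -- c₁ = 1, c₂ = 1
    have hcond1 : ¬((1:ℝ) = 0 ∧ (1:ℝ) = 0) := by norm_num
    unfold ptilde
    rw [if_neg hcond1, if_pos (⟨rfl, rfl⟩ : (1:ℝ) = 1 ∧ (1:ℝ) = 1), one_mul, div_le_one (by linarith)]
    linarith

lemma ptilde_le_pbar (c₁ c₂ θ Γ : ℝ) (hΓ : 1 < Γ) (hθΓ : Real.exp |θ| ≤ Γ) :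
    ptilde c₁ c₂ θ ≤ pbar c₁ c₂ Γ := by
  unfold ptilde pbar
  have hE : (0:ℝ) < Real.exp |θ| := Real.exp_pos _
  split_ifs with h1 h2
  · norm_num
  · norm_num
  · rw [div_le_div_iff₀ (by linarith) (by linarith)]
    nlinarith

lemma p_eq_ptilde (c₁ c₂ θ : ℝ) (hc₁ : c₁ = 0 ∨ c₁ = 1) (hc₂ : c₂ = 0 ∨ c₂ = 1) :
    (c₁ * Real.exp (θ * ((if c₁ = 1 then (1:ℝ) else -1) * (if 0 ≤ θ then (1:ℝ) else -1))) + c₂) /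
      (1 + Real.exp (θ * ((if c₁ = 1 then (1:ℝ) else -1) * (if 0 ≤ θ then (1:ℝ) else -1)))) =
    ptilde c₁ c₂ θ := by
  have hE : (0:ℝ) < Real.exp |θ| := Real.exp_pos _
  have hsign : θ * (if 0 ≤ θ then (1:ℝ) else -1) = |θ| := by
    split_ifs with h
    · rw [mul_one, abs_of_nonneg h]
    · rw [abs_of_neg (lt_of_not_ge h)]; ring
  rcases hc₁ with h1 | h1 <;> rcases hc₂ with h2 | h2 <;> subst h1 <;> subst h2
  · unfold ptilde
    rw [if_pos (⟨rfl, rfl⟩ : (0:ℝ) = 0 ∧ (0:ℝ) = 0), zero_mul, zero_add, zero_div]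
  · -- c₁ = 0, c₂ = 1 : Δ = -sign θ, θΔ = -|θ|
    have hcond1 : ¬((0:ℝ) = 0 ∧ (1:ℝ) = 0) := by norm_num
    have hcond2 : ¬((0:ℝ) = 1 ∧ (1:ℝ) = 1) := by norm_num
    unfold ptilde
    rw [if_neg hcond1, if_neg hcond2]
    have hc : ¬((0:ℝ) = 1) := by norm_num
    rw [if_neg hc]
    have hΔ : θ * (-1 * (if 0 ≤ θ then (1:ℝ) else -1)) = -|θ| := by
      rw [show θ * (-1 * (if 0 ≤ θ then (1:ℝ) else -1)) =
        -(θ * (if 0 ≤ θ then (1:ℝ) else -1)) by ring, hsign]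
    rw [hΔ, zero_mul, zero_add]
    rw [div_eq_div_iff (by positivity) (by linarith)]
    rw [Real.exp_neg]
    field_simp
    ring
  · -- c₁ = 1, c₂ = 0 : Δ = sign θ, θΔ = |θ|
    have hcond1 : ¬((1:ℝ) = 0 ∧ (0:ℝ) = 0) := by norm_num
    have hcond2 : ¬((1:ℝ) = 1 ∧ (0:ℝ) = 1) := by norm_num
    unfold ptilde
    rw [if_neg hcond1, if_neg hcond2, if_pos rfl, one_mul, add_zero,
      show θ * (1 * (if 0 ≤ θ then (1:ℝ) else -1)) = θ * (if 0 ≤ θ then (1:ℝ) else -1) by ring,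
      hsign]
  · -- c₁ = 1, c₂ = 1
    have hcond1 : ¬((1:ℝ) = 0 ∧ (1:ℝ) = 0) := by norm_num
    unfold ptilde
    rw [if_neg hcond1, if_pos (⟨rfl, rfl⟩ : (1:ℝ) = 1 ∧ (1:ℝ) = 1), one_mul]
    rw [div_eq_one_iff_eq (by positivity)]
    ring

/-- Corollary 2 of the paper: `F_{d,t}(p) ≤ F_{d,t}(p̃) ≤ F_{d,t}(p̄)`, and
the bound `F_{d,t}(p̃)` is attained for some choice of unobserved covariates
`u₁, u₂ ∈ [0,1]^n`. -/
theorem stmt16 (n : ℕ) (hn : 1 ≤ n) (t : ℝ)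
    (c₁ c₂ : Fin n → ℝ) (hc₁ : ∀ i, c₁ i = 0 ∨ c₁ i = 1) (hc₂ : ∀ i, c₂ i = 0 ∨ c₂ i = 1)
    (d : Fin n → ℝ) (hd : ∀ i, 0 ≤ d i) (θ : Fin n → ℝ)
    (u₁ u₂ : Fin n → ℝ) (hu₁ : ∀ i, u₁ i ∈ Set.Icc (0:ℝ) 1) (hu₂ : ∀ i, u₂ i ∈ Set.Icc (0:ℝ) 1)
    (Γ : ℝ) (hΓ : 1 < Γ) (hθΓ : ∀ i, Real.exp |θ i| ≤ Γ) :
    tailF d t (fun i => (c₁ i * Real.exp (θ i * (u₁ i - u₂ i)) + c₂ i) /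
        (1 + Real.exp (θ i * (u₁ i - u₂ i)))) ≤
      tailF d t (fun i => ptilde (c₁ i) (c₂ i) (θ i)) ∧
    tailF d t (fun i => ptilde (c₁ i) (c₂ i) (θ i)) ≤
      tailF d t (fun i => pbar (c₁ i) (c₂ i) Γ) ∧
    ∃ v₁ v₂ : Fin n → ℝ, (∀ i, v₁ i ∈ Set.Icc (0:ℝ) 1) ∧ (∀ i, v₂ i ∈ Set.Icc (0:ℝ) 1) ∧
      tailF d t (fun i => (c₁ i * Real.exp (θ i * (v₁ i - v₂ i)) + c₂ i) /
          (1 + Real.exp (θ i * (v₁ i - v₂ i)))) =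
        tailF d t (fun i => ptilde (c₁ i) (c₂ i) (θ i)) := by
  have habs : ∀ i, |u₁ i - u₂ i| ≤ 1 := by
    intro i
    obtain ⟨a1, a2⟩ := hu₁ i
    obtain ⟨b1, b2⟩ := hu₂ i
    rw [abs_le]
    constructor <;> linarith
  refine ⟨?_, ?_, ?_⟩
  · exact tailF_mono d hd t _ _
      (fun i => p_nonneg _ _ _ (hc₁ i) (hc₂ i) (Real.exp_pos _))
      (fun i => p_le_ptilde _ _ _ _ (hc₁ i) (hc₂ i) (habs i))
      (fun i => ptilde_le_one _ _ _)
  · exact tailF_mono d hd t _ _ (fun i => ptilde_nonneg _ _ _)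
      (fun i => ptilde_le_pbar _ _ _ _ hΓ (hθΓ i)) (fun i => pbar_le_one _ _ _ hΓ)
  · set Δ : Fin n → ℝ :=
      fun i => (if c₁ i = 1 then (1:ℝ) else -1) * (if 0 ≤ θ i then (1:ℝ) else -1) with hΔdef
    have hΔ1 : ∀ i, Δ i = 1 ∨ Δ i = -1 := by
      intro i
      simp only [hΔdef]
      split_ifs <;> norm_num
    refine ⟨fun i => max (Δ i) 0, fun i => max (-(Δ i)) 0, ?_, ?_, ?_⟩
    · intro i
      rcases hΔ1 i with h | h <;> simp only [Set.mem_Icc] <;> rw [h] <;>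
        constructor <;> norm_num
    · intro i
      rcases hΔ1 i with h | h <;> simp only [Set.mem_Icc] <;> rw [h] <;>
        constructor <;> norm_num
    · have hfun : (fun i => (c₁ i * Real.exp (θ i * (max (Δ i) 0 - max (-(Δ i)) 0)) + c₂ i) /
          (1 + Real.exp (θ i * (max (Δ i) 0 - max (-(Δ i)) 0)))) =
          fun i => ptilde (c₁ i) (c₂ i) (θ i) := by
        funext i
        rw [max_zero_sub_max_neg_zero_eq_self (Δ i)]
        exact p_eq_ptilde (c₁ i) (c₂ i) (θ i) (hc₁ i) (hc₂ i)
      rw [hfun]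
end
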